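/- sin(6π/17)/sin(3π/17) - sin(4π/17)/sin(2π/17) - sin(8π/17)/sin(4π/17) + sin(2π/17)/sin(π/17) + sin(7π/17)/sin(5π/17) - sin(5π/17)/sin(6π/17) + sin(3π/17)/sin(7π/17) - sin(π/17)/sin(8π/17) = 1. -/

import Mathlib

open Real

theorem stmt_8 :
    Real.sin (6 * π / 17) / Real.sin (3 * π / 17)
      - Real.sin (4 * π / 17) / Real.sin (2 * π / 17)
      - Real.sin (8 * π / 17) / Real.sin (4 * π / 17)
      + Real.sin (2 * π / 17) / Real.sin (π / 17)
      + Real.sin (7 * π / 17) / Real.sin (5 * π / 17)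
      - Real.sin (5 * π / 17) / Real.sin (6 * π / 17)
      + Real.sin (3 * π / 17) / Real.sin (7 * π / 17)
      - Real.sin (π / 17) / Real.sin (8 * π / 17) = 1 := by
  have hpi := Real.pi_pos
  have h1 : 0 < Real.sin (π / 17) :=
    Real.sin_pos_of_pos_of_lt_pi (by linarith) (by linarith)
  have h2 : 0 < Real.sin (2 * π / 17) :=
    Real.sin_pos_of_pos_of_lt_pi (by linarith) (by linarith)
  have h3 : 0 < Real.sin (3 * π / 17) :=
    Real.sin_pos_of_pos_of_lt_pi (by linarith) (by linarith)
  have h4 : 0 < Real.sin (4 * π / 17) :=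
    Real.sin_pos_of_pos_of_lt_pi (by linarith) (by linarith)
  have h5 : 0 < Real.sin (5 * π / 17) :=
    Real.sin_pos_of_pos_of_lt_pi (by linarith) (by linarith)
  have h6 : 0 < Real.sin (6 * π / 17) :=
    Real.sin_pos_of_pos_of_lt_pi (by linarith) (by linarith)
  have h7 : 0 < Real.sin (7 * π / 17) :=
    Real.sin_pos_of_pos_of_lt_pi (by linarith) (by linarith)
  have h8 : 0 < Real.sin (8 * π / 17) :=
    Real.sin_pos_of_pos_of_lt_pi (by linarith) (by linarith)
  have h9 : 0 < Real.sin (9 * π / 17) :=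
    Real.sin_pos_of_pos_of_lt_pi (by linarith) (by linarith)
  -- reduce each quotient to 2 * cos via double angle (and sin (π - x) = sin x)
  have q1 : Real.sin (6 * π / 17) / Real.sin (3 * π / 17) = 2 * Real.cos (3 * π / 17) := by
    rw [show (6:ℝ) * π / 17 = 2 * (3 * π / 17) by ring, Real.sin_two_mul]
    field_simp [h3.ne']
  have q2 : Real.sin (4 * π / 17) / Real.sin (2 * π / 17) = 2 * Real.cos (2 * π / 17) := by
    rw [show (4:ℝ) * π / 17 = 2 * (2 * π / 17) by ring, Real.sin_two_mul]
    field_simp [h2.ne']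
  have q3 : Real.sin (8 * π / 17) / Real.sin (4 * π / 17) = 2 * Real.cos (4 * π / 17) := by
    rw [show (8:ℝ) * π / 17 = 2 * (4 * π / 17) by ring, Real.sin_two_mul]
    field_simp [h4.ne']
  have q4 : Real.sin (2 * π / 17) / Real.sin (π / 17) = 2 * Real.cos (π / 17) := by
    rw [show (2:ℝ) * π / 17 = 2 * (π / 17) by ring, Real.sin_two_mul]
    field_simp [h1.ne']
  have q5 : Real.sin (7 * π / 17) / Real.sin (5 * π / 17) = 2 * Real.cos (5 * π / 17) := by
    rw [show (7:ℝ) * π / 17 = π - 10 * π / 17 by ring, Real.sin_pi_sub,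
      show (10:ℝ) * π / 17 = 2 * (5 * π / 17) by ring, Real.sin_two_mul]
    field_simp [h5.ne']
  have q6 : Real.sin (5 * π / 17) / Real.sin (6 * π / 17) = 2 * Real.cos (6 * π / 17) := by
    rw [show (5:ℝ) * π / 17 = π - 12 * π / 17 by ring, Real.sin_pi_sub,
      show (12:ℝ) * π / 17 = 2 * (6 * π / 17) by ring, Real.sin_two_mul]
    field_simp [h6.ne']
  have q7 : Real.sin (3 * π / 17) / Real.sin (7 * π / 17) = 2 * Real.cos (7 * π / 17) := by
    rw [show (3:ℝ) * π / 17 = π - 14 * π / 17 by ring, Real.sin_pi_sub,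
      show (14:ℝ) * π / 17 = 2 * (7 * π / 17) by ring, Real.sin_two_mul]
    field_simp [h7.ne']
  have q8 : Real.sin (π / 17) / Real.sin (8 * π / 17) = 2 * Real.cos (8 * π / 17) := by
    rw [show π / 17 = π - 16 * π / 17 by ring, Real.sin_pi_sub,
      show (16:ℝ) * π / 17 = 2 * (8 * π / 17) by ring, Real.sin_two_mul]
    field_simp [h8.ne']
  rw [q1, q2, q3, q4, q5, q6, q7, q8]
  -- product-to-sum identities against sin (9π/17)
  have e1 : 2 * Real.sin (9 * π / 17) * Real.cos (π / 17)
      = Real.sin (7 * π / 17) + Real.sin (8 * π / 17) := by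
    have a := Real.sin_add (9 * π / 17) (π / 17)
    have b := Real.sin_sub (9 * π / 17) (π / 17)
    have a' : Real.sin (9 * π / 17 + π / 17) = Real.sin (7 * π / 17) := by
      rw [show 9 * π / 17 + π / 17 = π - 7 * π / 17 by ring, Real.sin_pi_sub]
    rw [show 9 * π / 17 - π / 17 = 8 * π / 17 by ring] at b
    linear_combination a' - a - b
  have e2 : 2 * Real.sin (9 * π / 17) * Real.cos (2 * π / 17)
      = Real.sin (6 * π / 17) + Real.sin (7 * π / 17) := by
    have a := Real.sin_add (9 * π / 17) (2 * π / 17)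
    have b := Real.sin_sub (9 * π / 17) (2 * π / 17)
    have a' : Real.sin (9 * π / 17 + 2 * π / 17) = Real.sin (6 * π / 17) := by
      rw [show 9 * π / 17 + 2 * π / 17 = π - 6 * π / 17 by ring, Real.sin_pi_sub]
    rw [show 9 * π / 17 - 2 * π / 17 = 7 * π / 17 by ring] at b
    linear_combination a' - a - b
  have e3 : 2 * Real.sin (9 * π / 17) * Real.cos (3 * π / 17)
      = Real.sin (5 * π / 17) + Real.sin (6 * π / 17) := by
    have a := Real.sin_add (9 * π / 17) (3 * π / 17)
    have b := Real.sin_sub (9 * π / 17) (3 * π / 17)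
    have a' : Real.sin (9 * π / 17 + 3 * π / 17) = Real.sin (5 * π / 17) := by
      rw [show 9 * π / 17 + 3 * π / 17 = π - 5 * π / 17 by ring, Real.sin_pi_sub]
    rw [show 9 * π / 17 - 3 * π / 17 = 6 * π / 17 by ring] at b
    linear_combination a' - a - b
  have e4 : 2 * Real.sin (9 * π / 17) * Real.cos (4 * π / 17)
      = Real.sin (4 * π / 17) + Real.sin (5 * π / 17) := by
    have a := Real.sin_add (9 * π / 17) (4 * π / 17)
    have b := Real.sin_sub (9 * π / 17) (4 * π / 17)
    have a' : Real.sin (9 * π / 17 + 4 * π / 17) = Real.sin (4 * π / 17) := by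
      rw [show 9 * π / 17 + 4 * π / 17 = π - 4 * π / 17 by ring, Real.sin_pi_sub]
    rw [show 9 * π / 17 - 4 * π / 17 = 5 * π / 17 by ring] at b
    linear_combination a' - a - b
  have e5 : 2 * Real.sin (9 * π / 17) * Real.cos (5 * π / 17)
      = Real.sin (3 * π / 17) + Real.sin (4 * π / 17) := by
    have a := Real.sin_add (9 * π / 17) (5 * π / 17)
    have b := Real.sin_sub (9 * π / 17) (5 * π / 17)
    have a' : Real.sin (9 * π / 17 + 5 * π / 17) = Real.sin (3 * π / 17) := by
      rw [show 9 * π / 17 + 5 * π / 17 = π - 3 * π / 17 by ring, Real.sin_pi_sub]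
    rw [show 9 * π / 17 - 5 * π / 17 = 4 * π / 17 by ring] at b
    linear_combination a' - a - b
  have e6 : 2 * Real.sin (9 * π / 17) * Real.cos (6 * π / 17)
      = Real.sin (2 * π / 17) + Real.sin (3 * π / 17) := by
    have a := Real.sin_add (9 * π / 17) (6 * π / 17)
    have b := Real.sin_sub (9 * π / 17) (6 * π / 17)
    have a' : Real.sin (9 * π / 17 + 6 * π / 17) = Real.sin (2 * π / 17) := by
      rw [show 9 * π / 17 + 6 * π / 17 = π - 2 * π / 17 by ring, Real.sin_pi_sub]
    rw [show 9 * π / 17 - 6 * π / 17 = 3 * π / 17 by ring] at b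
    linear_combination a' - a - b
  have e7 : 2 * Real.sin (9 * π / 17) * Real.cos (7 * π / 17)
      = Real.sin (π / 17) + Real.sin (2 * π / 17) := by
    have a := Real.sin_add (9 * π / 17) (7 * π / 17)
    have b := Real.sin_sub (9 * π / 17) (7 * π / 17)
    have a' : Real.sin (9 * π / 17 + 7 * π / 17) = Real.sin (π / 17) := by
      rw [show 9 * π / 17 + 7 * π / 17 = π - π / 17 by ring, Real.sin_pi_sub]
    rw [show 9 * π / 17 - 7 * π / 17 = 2 * π / 17 by ring] at b
    linear_combination a' - a - b
  have e8 : 2 * Real.sin (9 * π / 17) * Real.cos (8 * π / 17)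
      = Real.sin (π / 17) := by
    have a := Real.sin_add (9 * π / 17) (8 * π / 17)
    have b := Real.sin_sub (9 * π / 17) (8 * π / 17)
    have a' : Real.sin (9 * π / 17 + 8 * π / 17) = 0 := by
      rw [show 9 * π / 17 + 8 * π / 17 = π by ring, Real.sin_pi]
    rw [show 9 * π / 17 - 8 * π / 17 = π / 17 by ring] at b
    linear_combination a' - a - b
  have hsym : Real.sin (9 * π / 17) = Real.sin (8 * π / 17) := by
    rw [show 9 * π / 17 = π - 8 * π / 17 by ring, Real.sin_pi_sub]
  have hmul : (2 * Real.cos (3 * π / 17) - 2 * Real.cos (2 * π / 17)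
      - 2 * Real.cos (4 * π / 17) + 2 * Real.cos (π / 17) + 2 * Real.cos (5 * π / 17)
      - 2 * Real.cos (6 * π / 17) + 2 * Real.cos (7 * π / 17) - 2 * Real.cos (8 * π / 17))
      * Real.sin (9 * π / 17) = 1 * Real.sin (9 * π / 17) := by
    linear_combination e3 - e2 - e4 + e1 + e5 - e6 + e7 - e8 - hsym
  exact mul_right_cancel₀ h9.ne' hmul
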